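/- For c ∈ (0,1), the function u = (u₁, u₂, u₃) with u₁(x) = c·sech(√(1−c²)·x), u₂(x) = tanh(√(1−c²)·x), u₃(x) = √(1−c²)·sech(√(1−c²)·x) satisfies the one-dimensional traveling wave system −u₁'' = 2e(u)u₁ + c(u₂u₃' − u₃u₂'), −u₂'' = 2e(u)u₂ + c(u₃u₁' − u₁u₃'), −u₃'' = 2e(u)u₃ − u₃ + c(u₁u₂' − u₂u₁'), where e(u) = (1/2)(|u'|² + u₃²). -/

import Mathlib

/-- The explicit one-dimensional profile solves the traveling wave system of the
    Landau–Lifshitz equation with easy-plane anisotropy. -/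
theorem stmt5 (c : ℝ) (hc : c ∈ Set.Ioo (0:ℝ) 1)
    (u₁ u₂ u₃ e : ℝ → ℝ)
    (hu₁ : ∀ x, u₁ x = c * (1 / Real.cosh (Real.sqrt (1 - c^2) * x)))
    (hu₂ : ∀ x, u₂ x = Real.tanh (Real.sqrt (1 - c^2) * x))
    (hu₃ : ∀ x, u₃ x = Real.sqrt (1 - c^2) * (1 / Real.cosh (Real.sqrt (1 - c^2) * x)))
    (he : ∀ x, e x = (1/2) * ((deriv u₁ x)^2 + (deriv u₂ x)^2 + (deriv u₃ x)^2 + (u₃ x)^2)) :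
    (∀ x : ℝ, -(deriv (deriv u₁) x) = 2 * e x * u₁ x + c * (u₂ x * deriv u₃ x - u₃ x * deriv u₂ x)) ∧
    (∀ x : ℝ, -(deriv (deriv u₂) x) = 2 * e x * u₂ x + c * (u₃ x * deriv u₁ x - u₁ x * deriv u₃ x)) ∧
    (∀ x : ℝ, -(deriv (deriv u₃) x) = 2 * e x * u₃ x - u₃ x + c * (u₁ x * deriv u₂ x - u₂ x * deriv u₁ x)) := by
  obtain ⟨hc0, hc1⟩ := hc
  set ν := Real.sqrt (1 - c^2) with hνdef
  have h1c : (0:ℝ) < 1 - c^2 := by nlinarith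
  have hν2 : ν^2 = 1 - c^2 := Real.sq_sqrt h1c.le
  have hC : ∀ x:ℝ, Real.cosh (ν*x) ≠ 0 := fun x => (Real.cosh_pos (ν*x)).ne'
  have hcs : ∀ x:ℝ, Real.cosh (ν*x)^2 = Real.sinh (ν*x)^2 + 1 := fun x => Real.cosh_sq (ν*x)
  have hcosh : ∀ x:ℝ, HasDerivAt (fun y => Real.cosh (ν*y)) (Real.sinh (ν*x) * ν) x := by
    intro x
    simpa using ((hasDerivAt_id x).const_mul ν).cosh
  have hsinh : ∀ x:ℝ, HasDerivAt (fun y => Real.sinh (ν*y)) (Real.cosh (ν*x) * ν) x := by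
    intro x
    simpa using ((hasDerivAt_id x).const_mul ν).sinh
  have hu₁' : u₁ = fun x => c * (Real.cosh (ν*x))⁻¹ := funext fun x => by rw [hu₁ x, one_div]
  have hu₂' : u₂ = fun x => Real.sinh (ν*x) / Real.cosh (ν*x) :=
    funext fun x => by rw [hu₂ x, Real.tanh_eq_sinh_div_cosh]
  have hu₃' : u₃ = fun x => ν * (Real.cosh (ν*x))⁻¹ := funext fun x => by rw [hu₃ x, one_div]
  have D1 : ∀ x, HasDerivAt u₁ (-(c*ν) * Real.sinh (ν*x) / Real.cosh (ν*x)^2) x := by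
    intro x
    rw [hu₁']
    have h := ((hcosh x).inv (hC x)).const_mul c
    refine h.congr_deriv ?_
    field_simp
  have D2 : ∀ x, HasDerivAt u₂ (ν / Real.cosh (ν*x)^2) x := by
    intro x
    rw [hu₂']
    have h := (hsinh x).div (hcosh x) (hC x)
    refine h.congr_deriv ?_
    rw [div_eq_div_iff (hC x |> pow_ne_zero 2) (hC x |> pow_ne_zero 2)]
    linear_combination (ν*Real.cosh (ν*x)^2) * hcs x
  have D3 : ∀ x, HasDerivAt u₃ (-(ν*ν) * Real.sinh (ν*x) / Real.cosh (ν*x)^2) x := by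
    intro x
    rw [hu₃']
    have h := ((hcosh x).inv (hC x)).const_mul ν
    refine h.congr_deriv ?_
    field_simp
  have d1 : deriv u₁ = fun x => -(c*ν) * Real.sinh (ν*x) / Real.cosh (ν*x)^2 :=
    funext fun x => (D1 x).deriv
  have d2 : deriv u₂ = fun x => ν / Real.cosh (ν*x)^2 :=
    funext fun x => (D2 x).deriv
  have d3 : deriv u₃ = fun x => -(ν*ν) * Real.sinh (ν*x) / Real.cosh (ν*x)^2 :=
    funext fun x => (D3 x).deriv
  have hex : ∀ x, e x = ν^2 / Real.cosh (ν*x)^2 := by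
    intro x
    rw [he x, (D1 x).deriv, (D2 x).deriv, (D3 x).deriv, hu₃ x, one_div]
    field_simp
    linear_combination (Real.cosh (ν*x)^4*(c^2-1)) * hcs x + (Real.cosh (ν*x)^4 + Real.cosh (ν*x)^4*Real.sinh (ν*x)^2 + Real.cosh (ν*x)^4*Real.sinh (ν*x)^2*ν^2 - Real.cosh (ν*x)^6) * hν2 + (-ν^2*(1-Real.cosh (ν*x)^4)) * hcs x + (ν^2*Real.sinh (ν*x)^2*(1-Real.cosh (ν*x)^4)) * hν2
  refine ⟨?_, ?_, ?_⟩ <;> intro x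
  · have hDD := ((hsinh x).const_mul (-(c*ν))).div ((hcosh x).pow 2) (pow_ne_zero 2 (hC x))
    rw [d1, show deriv (fun x => -(c*ν) * Real.sinh (ν*x) / Real.cosh (ν*x)^2) x = _ from hDD.deriv, Pi.pow_apply, hex x, hu₁ x, hu₂ x, hu₃ x, (D2 x).deriv, (D3 x).deriv,
      Real.tanh_eq_sinh_div_cosh, one_div]
    field_simp
    linear_combination (c*ν^2*Real.cosh (ν*x)^10) * hcs x + (ν^2*Real.cosh (ν*x) - c*ν^2*Real.cosh (ν*x)^10) * hcs x
  · have hDD := (hasDerivAt_const x ν).div ((hcosh x).pow 2) (pow_ne_zero 2 (hC x))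
    rw [d2, show deriv (fun x => ν / Real.cosh (ν*x)^2) x = _ from hDD.deriv, Pi.pow_apply, hex x, hu₁ x, hu₂ x, hu₃ x, (D1 x).deriv, (D3 x).deriv,
      Real.tanh_eq_sinh_div_cosh, one_div]
    field_simp
    ring
  · have hDD := ((hsinh x).const_mul (-(ν*ν))).div ((hcosh x).pow 2) (pow_ne_zero 2 (hC x))
    rw [d3, show deriv (fun x => -(ν*ν) * Real.sinh (ν*x) / Real.cosh (ν*x)^2) x = _ from hDD.deriv, Pi.pow_apply, hex x, hu₁ x, hu₂ x, hu₃ x, (D1 x).deriv, (D2 x).deriv,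
      Real.tanh_eq_sinh_div_cosh, one_div]
    field_simp
    linear_combination (2*ν*Real.cosh (ν*x)^8 - c^2*ν*Real.cosh (ν*x)^8) * hcs x + (-2*ν*Real.cosh (ν*x)^8 - 2*ν*Real.cosh (ν*x)^8*Real.sinh (ν*x)^2 + ν*Real.cosh (ν*x)^10) * hν2 + (ν*Real.cosh (ν*x)*c^2 - ν*Real.cosh (ν*x)^8*c^2 + 2*ν^3*Real.cosh (ν*x) - 2*ν^3*Real.cosh (ν*x)^8) * hcs x + (-ν*Real.cosh (ν*x)^3 + ν*Real.cosh (ν*x)^10) * hν2
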